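/- Let m ≥ 2, n ≥ 1, let p : Fin m → Fin n → ℕ be positive processing times, and suppose σ is a feasible sequence with p i (σ 0) = p (i+1) (σ (n−1)) for every i with i+1 < m. Then there exists a feasible sequence τ with Σ_{i=0}^{m−2} p i (τ 0) = min_{k} Σ_{i=0}^{m−2} p i (k), and τ is optimal: for every feasible sequence ρ, Σ_{i=0}^{m−2} p i (τ 0) + Σ_j p (m−1) (j) ≤ Σ_{i=0}^{m−2} p i (ρ 0) + Σ_j p (m−1) (j). -/

import Mathlib

/-- A sequence `σ` for an m-machine no-idle/no-wait flow shop instance is feasible if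
`p (i+1) (σ j) = p i (σ (j+1))` for every machine `i` with `i+1 < m` and every
position `j` with `j+1 < n`. -/
def FeasibleSeqM (m n : ℕ) (p : Fin m → Fin n → ℕ) (σ : Fin n ≃ Fin n) : Prop :=
  ∀ i : Fin m, ∀ hi : (i : ℕ) + 1 < m, ∀ j : Fin n, ∀ hj : (j : ℕ) + 1 < n,
    p ⟨(i : ℕ) + 1, hi⟩ (σ j) = p i (σ ⟨(j : ℕ) + 1, hj⟩)

set_option maxHeartbeats 1000000 in
/-- if a feasible sequence `σ` of an m-machine instance satisfies
`p i (σ 0) = p (i+1) (σ (n-1))` for every `i` with `i+1 < m`, then there is a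
feasible sequence `τ` whose first job minimizes `Σ_{i=0}^{m-2} p i (·)`, and `τ` is
optimal: its makespan `Σ_{i=0}^{m-2} p i (τ 0) + Σ_j p (m-1) j` is at most the
makespan of any feasible sequence `ρ`. -/
theorem stmt_14 (m n : ℕ) (hm : 2 ≤ m) (hn : 1 ≤ n)
    (p : Fin m → Fin n → ℕ) (hp : ∀ i j, 0 < p i j)
    (σ : Fin n ≃ Fin n) (hσ : FeasibleSeqM m n p σ)
    (hcyc : ∀ i : Fin m, ∀ hi : (i : ℕ) + 1 < m,
      p i (σ ⟨0, by omega⟩) = p ⟨(i : ℕ) + 1, hi⟩ (σ ⟨n - 1, by omega⟩)) :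
    ∃ τ : Fin n ≃ Fin n, FeasibleSeqM m n p τ ∧
      (∀ k : Fin n,
        ∑ i ∈ Finset.univ.filter (fun i : Fin m => (i : ℕ) + 1 < m), p i (τ ⟨0, by omega⟩)
          ≤ ∑ i ∈ Finset.univ.filter (fun i : Fin m => (i : ℕ) + 1 < m), p i k) ∧
      (∀ ρ : Fin n ≃ Fin n, FeasibleSeqM m n p ρ →
        (∑ i ∈ Finset.univ.filter (fun i : Fin m => (i : ℕ) + 1 < m), p i (τ ⟨0, by omega⟩))
            + ∑ j, p ⟨m - 1, by omega⟩ j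
          ≤ (∑ i ∈ Finset.univ.filter (fun i : Fin m => (i : ℕ) + 1 < m), p i (ρ ⟨0, by omega⟩))
              + ∑ j, p ⟨m - 1, by omega⟩ j) := by
  haveI : NeZero n := ⟨by omega⟩
  obtain ⟨j0, -, hj0⟩ := Finset.exists_min_image Finset.univ
    (fun k : Fin n => ∑ i ∈ Finset.univ.filter (fun i : Fin m => (i : ℕ) + 1 < m), p i k)
    ⟨⟨0, by omega⟩, Finset.mem_univ _⟩
  obtain ⟨k, hk⟩ : ∃ k, σ k = j0 := ⟨σ.symm j0, σ.apply_symm_apply j0⟩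
  have h0 : ((Equiv.addRight k).trans σ) ⟨0, by omega⟩ = j0 := by
    simp only [Equiv.trans_apply, Equiv.coe_addRight]
    have h : (⟨0, by omega⟩ : Fin n) + k = k := by
      apply Fin.ext; simp [Fin.add_def, Nat.mod_eq_of_lt k.isLt]
    rw [h, hk]
  refine ⟨(Equiv.addRight k).trans σ, ?_, ?_, ?_⟩
  · intro i hi j hj
    simp only [Equiv.trans_apply, Equiv.coe_addRight]
    have hjk : (⟨(j : ℕ) + 1, hj⟩ : Fin n) + k = (j + k) + 1 := by
      have h : (⟨(j : ℕ) + 1, hj⟩ : Fin n) = j + 1 := by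
        apply Fin.ext
        simp [Fin.add_def, Nat.mod_eq_of_lt hj, Nat.mod_eq_of_lt (by omega : 1 < n)]
      rw [h]; exact add_right_comm _ _ _
    rw [hjk]
    have hn2 : 1 < n := by omega
    by_cases ht : ((j + k : Fin n) : ℕ) + 1 < n
    · have h1 : (j + k + 1 : Fin n) = ⟨((j + k : Fin n) : ℕ) + 1, ht⟩ := by
        apply Fin.ext
        have ht' : ((j : ℕ) + (k : ℕ)) % n + 1 < n := by
          simpa [Fin.add_def] using ht
        simp only [Fin.add_def, Fin.val_one', Nat.mod_eq_of_lt hn2]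
        rw [← Nat.mod_add_mod, Nat.mod_eq_of_lt (by omega : ((j : ℕ) + (k : ℕ)) % n < n),
          Nat.mod_eq_of_lt ht']
      rw [h1]
      exact hσ i hi (j + k) ht
    · have htn : ((j + k : Fin n) : ℕ) = n - 1 := by
        have := (j + k : Fin n).isLt; omega
      have h1 : (j + k : Fin n) = ⟨n - 1, by omega⟩ := Fin.ext htn
      have h2 : (j + k + 1 : Fin n) = ⟨0, by omega⟩ := by
        apply Fin.ext
        have htn' : ((j : ℕ) + (k : ℕ)) % n = n - 1 := by
          simpa [Fin.add_def] using htn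
        simp only [Fin.add_def, Fin.val_one', Nat.mod_eq_of_lt hn2]
        rw [← Nat.mod_add_mod, htn', Nat.mod_eq_of_lt (by omega : n - 1 < n),
          Nat.sub_add_cancel hn, Nat.mod_self]
      simp only [h2]
      simp only [h1]
      exact (hcyc i hi).symm
  · intro kk
    rw [h0]; exact hj0 kk (Finset.mem_univ _)
  · intro ρ hρ
    rw [h0]
    exact Nat.add_le_add_right (hj0 (ρ ⟨0, by omega⟩) (Finset.mem_univ _)) _
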